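/- Let (N,G,ν) be a crossed module and consider the cat¹-group (N⋊G, s₀, s₁) with s₀(n,g)=(1,g), s₁(n,g)=(1,ν(n)g). Then the map φ: (N/[G,N]) × G_{ab} → (N⋊G)_{ab} given by φ([n],[g]) = [(n,g)] is a well-defined group isomorphism, where [G,N] is the normal subgroup of N generated by elements (ᵍn)n⁻¹ and G_{ab}=G/[G,G]. -/

import Mathlib

/-- For a crossed module (N,G,ν), the map
φ : (N/[G,N]) × G_ab → (N⋊G)_ab, ([n],[g]) ↦ [(n,g)] is a well-defined group
isomorphism, where [G,N] is the normal subgroup of N generated by the elements (ᵍn)n⁻¹. -/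
theorem semidirect_abelianization_iso {N G : Type*} [Group N] [Group G]
    (φ : G →* MulAut N) (ν : N →* G)
    (heq : ∀ (g : G) (n : N), ν (φ g n) = g * ν n * g⁻¹)
    (hpeif : ∀ n n' : N, φ (ν n) n' = n * n' * n⁻¹)
    (K : Subgroup N)
    (hK : K = Subgroup.normalClosure {x : N | ∃ (g : G) (n : N), x = φ g n * n⁻¹})
    (hKnormal : K.Normal) :
    ∃ e : (N ⧸ K) × Abelianization G ≃* Abelianization (N ⋊[φ] G),
      ∀ (n : N) (g : G),
        e (QuotientGroup.mk n, Abelianization.of g) =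
          Abelianization.of (⟨n, g⟩ : N ⋊[φ] G) := by
  have hgen : ∀ (g : G) (n : N), φ g n * n⁻¹ ∈ K := by
    intro g n
    rw [hK]
    exact Subgroup.subset_normalClosure ⟨g, n, rfl⟩
  have hmk : ∀ (g : G) (n : N), (QuotientGroup.mk (φ g n) : N ⧸ K) = QuotientGroup.mk n := by
    intro g n
    rw [QuotientGroup.eq]
    have := hgen g n⁻¹
    simpa using this
  -- N ⧸ K is commutative
  letI : CommGroup (N ⧸ K) :=
    { mul_comm := by
        intro a b
        induction a using QuotientGroup.induction_on with
        | H a =>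
        induction b using QuotientGroup.induction_on with
        | H b =>
        have h : (QuotientGroup.mk (a * b) : N ⧸ K) = QuotientGroup.mk (b * a) := by
          rw [QuotientGroup.eq]
          have := hgen (ν a⁻¹) b
          rw [hpeif, inv_inv] at this
          have h3 : (a * b)⁻¹ * (b * a) = b⁻¹ * (a⁻¹ * b * a * b⁻¹) * b⁻¹⁻¹ := by group
          rw [h3]
          exact hKnormal.conj_mem _ this b⁻¹
        simpa using h }
  -- forward map
  have hker : K ≤ ((Abelianization.of.comp (SemidirectProduct.inl : N →* N ⋊[φ] G))).ker := by
    rw [hK]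
    refine Subgroup.normalClosure_le_normal ?_
    rintro x ⟨g, n, rfl⟩
    have : Abelianization.of (SemidirectProduct.inl (φ g n) : N ⋊[φ] G) =
        Abelianization.of (SemidirectProduct.inl n : N ⋊[φ] G) := by
      rw [SemidirectProduct.inl_aut]
      simp [map_mul, mul_comm, mul_assoc, mul_left_comm]
    simp [MonoidHom.mem_ker, map_mul, this]
  let f : N ⧸ K →* Abelianization (N ⋊[φ] G) :=
    QuotientGroup.lift K (Abelianization.of.comp SemidirectProduct.inl) hker
  let g2 : Abelianization G →* Abelianization (N ⋊[φ] G) :=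
    Abelianization.lift (Abelianization.of.comp SemidirectProduct.inr)
  let F : (N ⧸ K) × Abelianization G →* Abelianization (N ⋊[φ] G) := f.coprod g2
  -- backward map
  let B1 : N ⋊[φ] G →* N ⧸ K :=
    { toFun := fun x => QuotientGroup.mk x.left
      map_one' := rfl
      map_mul' := by
        intro x y
        show (QuotientGroup.mk (x.left * φ x.right y.left) : N ⧸ K) = _
        rw [QuotientGroup.mk_mul, hmk] }
  let B : N ⋊[φ] G →* (N ⧸ K) × Abelianization G :=
    B1.prod (Abelianization.of.comp SemidirectProduct.rightHom)
  let Binv : Abelianization (N ⋊[φ] G) →* (N ⧸ K) × Abelianization G := Abelianization.lift B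
  have hBf : ∀ a, Binv (f a) = (a, 1) := by
    intro a
    induction a using QuotientGroup.induction_on with
    | H a => simp [f, Binv, B, B1]
  have hBg : ∀ b, Binv (g2 b) = (1, b) := by
    intro b
    induction b using QuotientGroup.induction_on with
    | H b =>
      have e1 : g2 (Abelianization.of b) =
          Abelianization.of (SemidirectProduct.inr b : N ⋊[φ] G) :=
        Abelianization.lift_apply_of ..
      have e2 : Binv (Abelianization.of (SemidirectProduct.inr b : N ⋊[φ] G)) =
          B (SemidirectProduct.inr b) := Abelianization.lift_apply_of ..
      show Binv (g2 (Abelianization.of b)) = (1, Abelianization.of b)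
      rw [e1, e2]
      simp [B, B1]
  have h1 : Binv.comp F = MonoidHom.id _ := by
    refine MonoidHom.ext ?_
    rintro ⟨a, b⟩
    show Binv (f a * g2 b) = (a, b)
    rw [map_mul, hBf, hBg]
    simp
  have h2 : F.comp Binv = MonoidHom.id _ := by
    refine Abelianization.hom_ext _ _ ?_
    refine SemidirectProduct.hom_ext ?_ ?_
    · ext n
      show F (Binv (Abelianization.of (SemidirectProduct.inl n))) = _
      simp [Binv, B, B1, F, f, g2]
    · ext g
      show F (Binv (Abelianization.of (SemidirectProduct.inr g))) = _
      simp [Binv, B, B1, F, f, g2]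
  refine ⟨MonoidHom.toMulEquiv F Binv h1 h2, ?_⟩
  intro n g
  show F (QuotientGroup.mk n, Abelianization.of g) = _
  have : (⟨n, g⟩ : N ⋊[φ] G) = SemidirectProduct.inl n * SemidirectProduct.inr g :=
    SemidirectProduct.mk_eq_inl_mul_inr g n
  simp [F, f, g2, this, map_mul]
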